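/- If triangle ABC has angle B equal to 120°, then the line BS bisects angle ABC, where S is the first isodynamic point. -/

import Mathlib

open EuclideanGeometry Real

noncomputable section

abbrev Pt := EuclideanSpace ℝ (Fin 2)

/-- `S` is the first isodynamic point of triangle `ABC`: it lies on the three
Apollonius circles (e.g. the `A`-Apollonius circle is the locus of `P` with
`PB/PC = AB/AC`) and lies inside the circumcircle. -/
def IsFirstIsodynamic (A B C S : Pt) : Prop :=
  dist S B * dist A C = dist S C * dist A B ∧
  dist S A * dist B C = dist S C * dist B A ∧
  dist S A * dist C B = dist S B * dist C A ∧
  ∃ O r, dist O A = r ∧ dist O B = r ∧ dist O C = r ∧ dist O S < r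


theorem stmt7 (A B C S : Pt)
    (hABC : AffineIndependent ℝ ![A, B, C])
    (hB : ∠ A B C = 2 * π / 3)
    (hS : IsFirstIsodynamic A B C S) :
    ∠ A B S = ∠ S B C := by
  obtain ⟨hA1, hA2, -, O, r, hOA, hOB, hOC, hOS⟩ := hS
  have hAB : A ≠ B := by
    have := hABC.injective.ne (show (0 : Fin 3) ≠ 1 by decide)
    simpa using this
  have hCB : C ≠ B := by
    have := hABC.injective.ne (show (2 : Fin 3) ≠ 1 by decide)
    simpa using this
  set u : Pt := A - B with hu
  set v : Pt := C - B with hv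
  set w : Pt := S - B with hwdef
  set o : Pt := O - B with hodef
  have hune : u ≠ 0 := sub_ne_zero_of_ne hAB
  have hvne : v ≠ 0 := sub_ne_zero_of_ne hCB
  set c : ℝ := ‖u‖ with hcdef
  set a : ℝ := ‖v‖ with hadef
  have hc : 0 < c := norm_pos_iff.mpr hune
  have ha : 0 < a := norm_pos_iff.mpr hvne
  have hangle : ∠ A B C = InnerProductGeometry.angle u v := rfl
  -- basic inner product values
  have huu : (inner ℝ u u : ℝ) = c ^ 2 := real_inner_self_eq_norm_sq u
  have hvv : (inner ℝ v v : ℝ) = a ^ 2 := real_inner_self_eq_norm_sq v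
  have hip : (inner ℝ u v : ℝ) = -(c * a) / 2 := by
    have h1 := InnerProductGeometry.cos_angle u v
    rw [← hangle, hB] at h1
    have h2 : Real.cos (2 * π / 3) = -(1 / 2) := by
      rw [show (2 * π / 3 : ℝ) = π - π / 3 by ring, Real.cos_pi_sub, Real.cos_pi_div_three]
    rw [h2] at h1
    have hD : (‖u‖ * ‖v‖ : ℝ) ≠ 0 := ne_of_gt (mul_pos hc ha)
    have h4 := h1.symm
    rw [div_eq_iff hD] at h4
    rw [← hcdef, ← hadef] at h4
    linear_combination h4
  have hvu : (inner ℝ v u : ℝ) = -(c * a) / 2 := by rw [real_inner_comm]; exact hip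
  -- linear independence of u and v
  have hLI : LinearIndependent ℝ ![u, v] := by
    rw [LinearIndependent.pair_iff]
    intro s t hst
    have e1 : s * (inner ℝ u u : ℝ) + t * (inner ℝ v u : ℝ) = 0 := by
      have h := congrArg (fun z : Pt => (inner ℝ z u : ℝ)) hst
      simpa only [inner_add_left, real_inner_smul_left, inner_zero_left] using h
    have e2 : s * (inner ℝ u v : ℝ) + t * (inner ℝ v v : ℝ) = 0 := by
      have h := congrArg (fun z : Pt => (inner ℝ z v : ℝ)) hst
      simpa only [inner_add_left, real_inner_smul_left, inner_zero_left] using h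
    rw [huu, hvu] at e1
    rw [hip, hvv] at e2
    have hne : c ^ 2 * a ^ 2 * (3 / 4) ≠ 0 := by positivity
    constructor
    · have hs : s * (c ^ 2 * a ^ 2 * (3 / 4)) = 0 := by
        linear_combination a ^ 2 * e1 + (c * a / 2) * e2
      exact (mul_eq_zero.mp hs).resolve_right hne
    · have ht : t * (c ^ 2 * a ^ 2 * (3 / 4)) = 0 := by
        linear_combination (c * a / 2) * e1 + c ^ 2 * e2
      exact (mul_eq_zero.mp ht).resolve_right hne
  -- coordinates of w in the basis (u, v)
  have hcard : Fintype.card (Fin 2) = Module.finrank ℝ Pt := by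
    simp [finrank_euclideanSpace]
  obtain ⟨p, q, hw⟩ : ∃ p q : ℝ, w = p • u + q • v := by
    have hsum := (basisOfLinearIndependentOfCardEqFinrank hLI hcard).sum_repr w
    rw [Fin.sum_univ_two, coe_basisOfLinearIndependentOfCardEqFinrank] at hsum
    simp only [Matrix.cons_val_zero, Matrix.cons_val_one, Matrix.head_cons] at hsum
    exact ⟨_, _, hsum.symm⟩
  -- scalar values of the relevant inner products
  have hiwu : (inner ℝ w u : ℝ) = p * c ^ 2 - q * (c * a) / 2 := by
    rw [hw, inner_add_left, real_inner_smul_left, real_inner_smul_left, huu, hvu]; ring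
  have hiuw : (inner ℝ u w : ℝ) = p * c ^ 2 - q * (c * a) / 2 := by
    rw [real_inner_comm]; exact hiwu
  have hiwv : (inner ℝ w v : ℝ) = q * a ^ 2 - p * (c * a) / 2 := by
    rw [hw, inner_add_left, real_inner_smul_left, real_inner_smul_left, hip, hvv]; ring
  have hivw : (inner ℝ v w : ℝ) = q * a ^ 2 - p * (c * a) / 2 := by
    rw [real_inner_comm]; exact hiwv
  have hiww : (inner ℝ w w : ℝ) = p ^ 2 * c ^ 2 + q ^ 2 * a ^ 2 - p * q * (c * a) := by
    nth_rewrite 1 [hw]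
    rw [inner_add_left, real_inner_smul_left, real_inner_smul_left, hiuw, hivw]
    ring
  -- squared norms
  have hw2 : ‖w‖ ^ 2 = p ^ 2 * c ^ 2 + q ^ 2 * a ^ 2 - p * q * (c * a) := by
    rw [← real_inner_self_eq_norm_sq]; exact hiww
  have huv2 : ‖u - v‖ ^ 2 = c ^ 2 + a ^ 2 + c * a := by
    rw [norm_sub_sq_real, hip, ← hcdef, ← hadef]; ring
  have hwv2 : ‖w - v‖ ^ 2 =
      p ^ 2 * c ^ 2 + q ^ 2 * a ^ 2 - p * q * (c * a) - 2 * q * a ^ 2 + p * (c * a) + a ^ 2 := by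
    rw [norm_sub_sq_real, hiwv, hw2, ← hadef]; ring
  have hwu2 : ‖w - u‖ ^ 2 =
      p ^ 2 * c ^ 2 + q ^ 2 * a ^ 2 - p * q * (c * a) - 2 * p * c ^ 2 + q * (c * a) + c ^ 2 := by
    rw [norm_sub_sq_real, hiwu, hw2, ← hcdef]; ring
  -- distances as norms
  have dSB : dist S B = ‖w‖ := by rw [dist_eq_norm, ← hwdef]
  have dAC : dist A C = ‖u - v‖ := by
    rw [dist_eq_norm]; congr 1; rw [hu, hv]; abel
  have dSC : dist S C = ‖w - v‖ := by
    rw [dist_eq_norm]; congr 1; rw [hwdef, hv]; abel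
  have dSA : dist S A = ‖w - u‖ := by
    rw [dist_eq_norm]; congr 1; rw [hwdef, hu]; abel
  have dABc : dist A B = c := by rw [dist_eq_norm, ← hu]
  have dBCa : dist B C = a := by rw [dist_comm, dist_eq_norm, ← hv]
  have dBAc : dist B A = c := by rw [dist_comm]; exact dABc
  -- scalar Apollonius equations
  have E1s : (p ^ 2 * c ^ 2 + q ^ 2 * a ^ 2 - p * q * (c * a)) * (c ^ 2 + a ^ 2 + c * a) =
      (p ^ 2 * c ^ 2 + q ^ 2 * a ^ 2 - p * q * (c * a) - 2 * q * a ^ 2 + p * (c * a) + a ^ 2) *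
        c ^ 2 := by
    have h := congrArg (fun t : ℝ => t ^ 2) hA1
    simp only [mul_pow] at h
    rw [dSB, dAC, dSC, dABc, hw2, huv2, hwv2] at h
    linear_combination h
  have E2s : (p ^ 2 * c ^ 2 + q ^ 2 * a ^ 2 - p * q * (c * a) - 2 * p * c ^ 2 + q * (c * a) +
        c ^ 2) * a ^ 2 =
      (p ^ 2 * c ^ 2 + q ^ 2 * a ^ 2 - p * q * (c * a) - 2 * q * a ^ 2 + p * (c * a) + a ^ 2) *
        c ^ 2 := by
    have h := congrArg (fun t : ℝ => t ^ 2) hA2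
    simp only [mul_pow] at h
    rw [dSA, dBCa, dSC, dBAc, hwu2, hwv2] at h
    linear_combination h
  -- circumcircle conditions
  have hob : ‖o‖ = r := by rw [hodef, ← dist_eq_norm]; exact hOB
  have hiuo : (inner ℝ u o : ℝ) = c ^ 2 / 2 := by
    have huo : ‖u - o‖ = r := by
      rw [hu, hodef, show A - B - (O - B) = A - O by abel, ← dist_eq_norm, dist_comm]
      exact hOA
    have h : ‖u - o‖ ^ 2 = r ^ 2 := by rw [huo]
    rw [norm_sub_sq_real, hob, ← hcdef] at h
    linarith [h]
  have hivo : (inner ℝ v o : ℝ) = a ^ 2 / 2 := by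
    have hvo : ‖v - o‖ = r := by
      rw [hv, hodef, show C - B - (O - B) = C - O by abel, ← dist_eq_norm, dist_comm]
      exact hOC
    have h : ‖v - o‖ ^ 2 = r ^ 2 := by rw [hvo]
    rw [norm_sub_sq_real, hob, ← hadef] at h
    linarith [h]
  have hQ : p ^ 2 * c ^ 2 + q ^ 2 * a ^ 2 - p * q * (c * a) < p * c ^ 2 + q * a ^ 2 := by
    have hwo : ‖w - o‖ < r := by
      rw [hwdef, hodef, show S - B - (O - B) = S - O by abel, ← dist_eq_norm, dist_comm]
      exact hOS
    have h : ‖w - o‖ ^ 2 < r ^ 2 := by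
      rw [pow_two, pow_two]
      exact mul_self_lt_mul_self (norm_nonneg _) hwo
    have hiwo : (inner ℝ w o : ℝ) = p * (c ^ 2 / 2) + q * (a ^ 2 / 2) := by
      rw [hw, inner_add_left, real_inner_smul_left, real_inner_smul_left, hiuo, hivo]
    rw [norm_sub_sq_real, hob, hiwo, hw2] at h
    linarith [h]
  -- main algebraic identity: product of the two loci vanishes
  have key : 3 * a ^ 2 * c ^ 2 * (a ^ 2 + a * c + c ^ 2) * ((p - q) * (p * c - q * a)) = 0 := by
    linear_combination
      (-(c * (a - c) ^ 2) + ((a - c) * c + c * (c + 2 * a) * p - a * (a + 2 * c) * q) * (a - c)) *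
          E1s -
        a * ((a - c) * c + c * (c + 2 * a) * p - a * (a + 2 * c) * q) * E2s
  have hb3 : 0 < a ^ 2 + a * c + c ^ 2 := add_pos (add_pos (pow_pos ha 2) (mul_pos ha hc)) (pow_pos hc 2)
  have h3 : 0 < 3 * a ^ 2 * c ^ 2 * (a ^ 2 + a * c + c ^ 2) :=
    mul_pos (mul_pos (mul_pos (by norm_num) (pow_pos ha 2)) (pow_pos hc 2)) hb3
  have hfac : (p - q) * (p * c - q * a) = 0 := (mul_eq_zero.mp key).resolve_left h3.ne'
  -- in all cases, p * c = q * a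
  have hG : p * c - q * a = 0 := by
    rcases mul_eq_zero.mp hfac with hpq | h
    · -- p = q would give the second isodynamic point; excluded by the circumcircle condition
      have hIII : a * c * (p * c * (c ^ 2 + 2 * a ^ 2) - q * a * (2 * c ^ 2 + a ^ 2)
          - a * c * (a - c)) = 0 := by
        linear_combination (a - c) * E1s - a * E2s
      have hq' : q = p := by linarith
      subst hq'
      have hIII2 : a * c * ((c - a) * (q * (a ^ 2 - a * c + c ^ 2) + a * c)) = 0 := by
        linear_combination hIII
      have hacne : (a * c : ℝ) ≠ 0 := (mul_pos ha hc).ne'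
      have hIII3 : (c - a) * (q * (a ^ 2 - a * c + c ^ 2) + a * c) = 0 :=
        (mul_eq_zero.mp hIII2).resolve_left hacne
      rcases mul_eq_zero.mp hIII3 with hca | K
      · linear_combination q * hca
      · exfalso
        have K2 : q ^ 2 * (a ^ 2 - a * c + c ^ 2) = -(a * c) * q := by
          linear_combination q * K
        have hb2 : 0 < a ^ 2 - a * c + c ^ 2 := by linarith [sq_nonneg (a - c), mul_pos ha hc]
        have hpneg : q < 0 := by
          rcases lt_or_ge q 0 with h' | h'
          · exact h'
          · exfalso
            have h'' : 0 ≤ q * (a ^ 2 - a * c + c ^ 2) := mul_nonneg h' hb2.le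
            linarith [K, h'', mul_pos ha hc]
        have hsum : 0 < q * (a ^ 2 + a * c + c ^ 2) := by linarith [K2, hQ]
        linarith [mul_neg_of_neg_of_pos hpneg hb3]
    · exact h
  -- conclude equality of the angles via injectivity of cos on [0, π]
  have hwne : w ≠ 0 := by
    intro h0
    rw [h0] at hw
    obtain ⟨hp0, hq0⟩ := LinearIndependent.pair_iff.mp hLI p q hw.symm
    rw [hp0, hq0] at hQ
    norm_num at hQ
  have hnw : 0 < ‖w‖ := norm_pos_iff.mpr hwne
  have hangle2 : ∠ A B S = InnerProductGeometry.angle u w := rfl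
  have hangle3 : ∠ S B C = InnerProductGeometry.angle w v := rfl
  have c1 : Real.cos (∠ A B S) = (inner ℝ u w : ℝ) / (‖u‖ * ‖w‖) := by
    rw [hangle2]; exact InnerProductGeometry.cos_angle u w
  have c2 : Real.cos (∠ S B C) = (inner ℝ w v : ℝ) / (‖w‖ * ‖v‖) := by
    rw [hangle3]; exact InnerProductGeometry.cos_angle w v
  refine Real.injOn_cos ⟨EuclideanGeometry.angle_nonneg _ _ _, EuclideanGeometry.angle_le_pi _ _ _⟩
    ⟨EuclideanGeometry.angle_nonneg _ _ _, EuclideanGeometry.angle_le_pi _ _ _⟩ ?_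
  rw [c1, c2, hiuw, hiwv, ← hcdef, ← hadef,
    div_eq_div_iff (mul_pos hc hnw).ne' (mul_pos hnw ha).ne']
  linear_combination (3 / 2) * a * c * ‖w‖ * hG
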